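/- In the Lie algebra L(A)⊗ℂ with the bracket of Proposition 4.2, the subspace spanned by the elements U_{i,j} + U_{j,i} for 1≤i≤j≤n is a Lie ideal. -/

import Mathlib

/-- Index set of the isomorphism classes of indecomposable Λ(n-1,1,1)-modules:
`Sum.inl (i,j)` is U_{i,j} (1≤i,j≤n), `Sum.inr (Sum.inl i)` is V_i, and
`Sum.inr (Sum.inr ⟨(i,j),_⟩)` is W_{i,j} (1≤i≤j≤n-1), all 0-indexed. -/
abbrev LIdx (n : ℕ) :=
  (Fin n × Fin n) ⊕ (Fin n ⊕ {p : Fin n × Fin n // p.1 ≤ p.2 ∧ p.2.val + 1 < n})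

/-- Structure constants of Riedtmann's Lie algebra of Λ(n-1,1,1)
(Proposition 4.2 of the paper). -/
noncomputable def cst {n : ℕ} (R : Type) [CommRing R] :
    LIdx n → LIdx n → (LIdx n →₀ R)
  | .inr (.inr p), .inr (.inr q) =>
      (if h : p.1.2.val + 1 = q.1.1.val then
        Finsupp.single (.inr (.inr ⟨(p.1.1, q.1.2), by
          obtain ⟨h1, _⟩ := p.2; obtain ⟨h2, h3⟩ := q.2
          refine ⟨?_, h3⟩
          change p.1.1 ≤ q.1.2
          rw [Fin.le_def] at h1 h2 ⊢
          omega⟩)) (1 : R)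
      else 0)
      - (if h : q.1.2.val + 1 = p.1.1.val then
        Finsupp.single (.inr (.inr ⟨(q.1.1, p.1.2), by
          obtain ⟨h1, h4⟩ := p.2; obtain ⟨h2, _⟩ := q.2
          refine ⟨?_, h4⟩
          change q.1.1 ≤ p.1.2
          rw [Fin.le_def] at h1 h2 ⊢
          omega⟩)) (1 : R)
      else 0)
  | .inr (.inr p), .inr (.inl l) =>
      if p.1.2.val + 1 = l.val then Finsupp.single (.inr (.inl p.1.1)) (1 : R) else 0
  | .inr (.inl l), .inr (.inr p) =>
      -(if p.1.2.val + 1 = l.val then Finsupp.single (.inr (.inl p.1.1)) (1 : R) else 0)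
  | .inr (.inr p), .inl (l, m) =>
      (if p.1.2.val + 1 = m.val then Finsupp.single (.inl (l, p.1.1)) (1 : R) else 0)
      + (if p.1.2.val + 1 = l.val then Finsupp.single (.inl (p.1.1, m)) (1 : R) else 0)
  | .inl (l, m), .inr (.inr p) =>
      -((if p.1.2.val + 1 = m.val then Finsupp.single (.inl (l, p.1.1)) (1 : R) else 0)
        + (if p.1.2.val + 1 = l.val then Finsupp.single (.inl (p.1.1, m)) (1 : R) else 0))
  | .inr (.inl i), .inr (.inl j) =>
      Finsupp.single (.inl (j, i)) (1 : R) - Finsupp.single (.inl (i, j)) (1 : R)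
  | _, _ => 0

/-- The bilinear bracket on the free module on the indecomposables determined by
the structure constants of Proposition 4.2. -/
noncomputable def brkt {n : ℕ} {R : Type} [CommRing R] (x y : LIdx n →₀ R) :
    LIdx n →₀ R :=
  Finsupp.sum x fun a r => Finsupp.sum y fun b s => (r * s) • cst R a b

/-- Basis element U_{i,j}. -/
noncomputable def Ub {n : ℕ} (R : Type) [CommRing R] (i j : Fin n) : LIdx n →₀ R :=
  Finsupp.single (.inl (i, j)) 1

/-- Basis element V_i. -/
noncomputable def Vb {n : ℕ} (R : Type) [CommRing R] (i : Fin n) : LIdx n →₀ R :=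
  Finsupp.single (.inr (.inl i)) 1

/-- Basis element W_{i,j} (i ≤ j ≤ n-1, 0-indexed j+1 < n). -/
noncomputable def Wb {n : ℕ} (R : Type) [CommRing R] (i j : Fin n)
    (h : i ≤ j ∧ j.val + 1 < n) : LIdx n →₀ R :=
  Finsupp.single (.inr (.inr ⟨(i, j), h⟩)) 1


section Aux

variable {n : ℕ} {R : Type} [CommRing R]

lemma brkt_add_right (x y z : LIdx n →₀ R) : brkt x (y + z) = brkt x y + brkt x z := by
  unfold brkt
  rw [← Finsupp.sum_add]
  apply Finsupp.sum_congr
  intro a _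
  apply Finsupp.sum_add_index <;> intros <;> simp [mul_add, add_smul]

lemma brkt_add_left (x y z : LIdx n →₀ R) : brkt (x + y) z = brkt x z + brkt y z := by
  unfold brkt
  apply Finsupp.sum_add_index <;> intros <;>
    simp [add_mul, add_smul, Finsupp.sum_add]

lemma brkt_zero_right (x : LIdx n →₀ R) : brkt x 0 = 0 := by simp [brkt]

lemma brkt_zero_left (x : LIdx n →₀ R) : brkt 0 x = 0 := by simp [brkt]

lemma brkt_smul_right (c : R) (x y : LIdx n →₀ R) : brkt x (c • y) = c • brkt x y := by
  unfold brkt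
  rw [Finsupp.smul_sum]
  apply Finsupp.sum_congr
  intro a _
  rw [Finsupp.sum_smul_index, Finsupp.smul_sum]
  · apply Finsupp.sum_congr
    intro b _
    rw [smul_smul]
    ring_nf
  · intros; simp

lemma brkt_smul_left (c : R) (x y : LIdx n →₀ R) : brkt (c • x) y = c • brkt x y := by
  unfold brkt
  rw [Finsupp.sum_smul_index, Finsupp.smul_sum]
  · apply Finsupp.sum_congr
    intro a _
    rw [Finsupp.smul_sum]
    apply Finsupp.sum_congr
    intro b _
    rw [smul_smul]
    ring_nf
  · intros; simp

lemma brkt_single_single (a b : LIdx n) (r s : R) :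
    brkt (Finsupp.single a r) (Finsupp.single b s) = (r * s) • cst R a b := by
  unfold brkt
  rw [Finsupp.sum_single_index, Finsupp.sum_single_index]
  · intros; simp
  · intros; rw [Finsupp.sum_single_index] <;> simp

lemma cst_inl_left (i j : Fin n) (a : LIdx n) :
    cst R (.inl (i, j)) a = - cst R a (.inl (i, j)) := by
  rcases a with ⟨l, m⟩ | l | p <;> simp [cst]

end Aux

section Main

variable (n : ℕ)

noncomputable def SS : Submodule ℂ (LIdx n →₀ ℂ) := Submodule.span ℂ
    {m : LIdx n →₀ ℂ | ∃ i j : Fin n, i ≤ j ∧ m = Ub ℂ i j + Ub ℂ j i}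

local notation "S" => SS n

lemma gen_mem (i j : Fin n) :
    (Finsupp.single (.inl (i, j)) 1 + Finsupp.single (.inl (j, i)) 1 : LIdx n →₀ ℂ) ∈ S := by
  rcases le_total i j with h | h
  · exact Submodule.subset_span ⟨i, j, h, rfl⟩
  · rw [add_comm]
    exact Submodule.subset_span ⟨j, i, h, rfl⟩

lemma key (a : LIdx n) (i j : Fin n) :
    cst ℂ a (.inl (i, j)) + cst ℂ a (.inl (j, i)) ∈ S := by
  rcases a with ⟨l, m⟩ | l | p
  · simp [cst]
  · simp [cst]
  · simp only [cst]
    by_cases h1 : p.1.2.val + 1 = j.val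
    · by_cases h2 : p.1.2.val + 1 = i.val
      · rw [if_pos h1, if_pos h2, if_pos h2, if_pos h1]
        rw [show (Finsupp.single (Sum.inl (i, p.1.1)) 1 + Finsupp.single (Sum.inl (p.1.1, j)) 1)
              + (Finsupp.single (Sum.inl (j, p.1.1)) 1 + Finsupp.single (Sum.inl (p.1.1, i)) 1)
            = (Finsupp.single (Sum.inl (i, p.1.1)) 1 + Finsupp.single (Sum.inl (p.1.1, i)) 1)
              + (Finsupp.single (Sum.inl (j, p.1.1)) (1 : ℂ)
                + Finsupp.single (Sum.inl (p.1.1, j)) 1) from by abel]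
        exact Submodule.add_mem _ (gen_mem n _ _) (gen_mem n _ _)
      · rw [if_pos h1, if_neg h2, if_neg h2, if_pos h1, add_zero, zero_add]
        exact gen_mem n _ _
    · by_cases h2 : p.1.2.val + 1 = i.val
      · rw [if_neg h1, if_pos h2, if_pos h2, if_neg h1, zero_add, add_zero, add_comm]
        exact gen_mem n _ _
      · rw [if_neg h1, if_neg h2, if_neg h2, if_neg h1, add_zero, zero_add]
        exact Submodule.zero_mem _

lemma key' (a : LIdx n) (i j : Fin n) :
    cst ℂ (.inl (i, j)) a + cst ℂ (.inl (j, i)) a ∈ S := by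
  rw [cst_inl_left, cst_inl_left, ← neg_add]
  exact Submodule.neg_mem _ (key n a i j)

lemma main_gen (x : LIdx n →₀ ℂ) (i j : Fin n) :
    brkt x (Ub ℂ i j + Ub ℂ j i) ∈ S ∧ brkt (Ub ℂ i j + Ub ℂ j i) x ∈ S := by
  induction x using Finsupp.induction_linear with
  | zero => constructor <;> simp [brkt_zero_left, brkt_zero_right, Submodule.zero_mem]
  | add f g hf hg =>
      constructor
      · rw [brkt_add_left]; exact Submodule.add_mem _ hf.1 hg.1
      · rw [brkt_add_right]; exact Submodule.add_mem _ hf.2 hg.2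
  | single a r =>
      constructor
      · rw [show (Finsupp.single a r : LIdx n →₀ ℂ) = r • Finsupp.single a 1 by simp,
          brkt_smul_left]
        apply Submodule.smul_mem
        rw [Ub, Ub, brkt_add_right, brkt_single_single, brkt_single_single]
        simp only [one_mul, mul_one, one_smul]
        exact key n a i j
      · rw [show (Finsupp.single a r : LIdx n →₀ ℂ) = r • Finsupp.single a 1 by simp,
          brkt_smul_right]
        apply Submodule.smul_mem
        rw [Ub, Ub, brkt_add_left, brkt_single_single, brkt_single_single]
        simp only [one_mul, mul_one, one_smul]
        exact key' n a i j

lemma main_ideal (x : LIdx n →₀ ℂ) : ∀ y ∈ S, brkt x y ∈ S ∧ brkt y x ∈ S := by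
  intro y hy
  induction hy using Submodule.span_induction with
  | mem m hm =>
      obtain ⟨i, j, _, rfl⟩ := hm
      exact main_gen n x i j
  | zero =>
      constructor <;> simp [brkt_zero_left, brkt_zero_right, Submodule.zero_mem]
  | add a b _ _ ha hb =>
      constructor
      · rw [brkt_add_right]; exact Submodule.add_mem _ ha.1 hb.1
      · rw [brkt_add_left]; exact Submodule.add_mem _ ha.2 hb.2
  | smul c a _ ha =>
      constructor
      · rw [brkt_smul_right]; exact Submodule.smul_mem _ _ ha.1
      · rw [brkt_smul_left]; exact Submodule.smul_mem _ _ ha.2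

end Main

/-- in L(A)⊗ℂ, the subspace spanned by the elements
U_{i,j} + U_{j,i} (1≤i≤j≤n) is a Lie ideal. -/
theorem stmt_15 (n : ℕ) :
    ∀ x : LIdx n →₀ ℂ,
      ∀ y ∈ Submodule.span ℂ
          {m : LIdx n →₀ ℂ | ∃ i j : Fin n, i ≤ j ∧ m = Ub ℂ i j + Ub ℂ j i},
        brkt x y ∈ Submodule.span ℂ
          {m : LIdx n →₀ ℂ | ∃ i j : Fin n, i ≤ j ∧ m = Ub ℂ i j + Ub ℂ j i} ∧
        brkt y x ∈ Submodule.span ℂ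
          {m : LIdx n →₀ ℂ | ∃ i j : Fin n, i ≤ j ∧ m = Ub ℂ i j + Ub ℂ j i} := by
  exact fun x => main_ideal n x
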